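/- The automorphism t = ac of the rooted binary tree lies in the normalizer of the group SHAut({0,1}*) of spherically homogeneous automorphisms: for every spherically homogeneous automorphism g, both t⁻¹gt and tgt⁻¹ are spherically homogeneous. -/

import Mathlib

/-- The states of the automaton `𝒜` generating the group `𝒢`. -/
inductive St
  | A | B | C | D
deriving DecidableEq

/-- The transition function of the automaton `𝒜`:
`a = (d,d)σ`, `b = (c,c)`, `c = (a,b)`, `d = (b,a)`. -/
def tr2 : St → ZMod 2 → St
  | .A, _ => .D
  | .B, _ => .C
  | .C, u => if u = 0 then .A else .B
  | .D, u => if u = 0 then .B else .A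

/-- The output function of the automaton `𝒜`: the state `a` flips the current letter,
all other states leave it unchanged. -/
def outp : St → ZMod 2 → ZMod 2
  | .A, u => u + 1
  | .B, u => u
  | .C, u => u
  | .D, u => u

/-- The state reached from `s` after reading the first `n` letters of `x`. -/
def stAt (s : St) (x : ℕ → ZMod 2) : ℕ → St
  | 0 => s
  | n + 1 => tr2 (stAt s x n) (x n)

/-- The action on the boundary `ℤ_2^∞` of the initial automaton `𝒜_s`. -/
def act (s : St) (x : ℕ → ZMod 2) : ℕ → ZMod 2 :=
  fun n => outp (stAt s x n) (x n)

lemma stAt_act (s : St) (x : ℕ → ZMod 2) (n : ℕ) : stAt s (act s x) n = stAt s x n := by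
  induction n with
  | zero => rfl
  | succ n ih =>
      show tr2 (stAt s (act s x) n) (act s x n) = tr2 (stAt s x n) (x n)
      rw [ih]
      show tr2 (stAt s x n) (outp (stAt s x n) (x n)) = tr2 (stAt s x n) (x n)
      cases stAt s x n <;> first | rfl | (simp [tr2, outp]; done) | (simp [tr2, outp] <;> congr)

lemma act_invol (s : St) : Function.Involutive (act s) := by
  intro x
  funext n
  show outp (stAt s (act s x) n) (act s x n) = x n
  rw [stAt_act]
  show outp (stAt s x n) (outp (stAt s x n) (x n)) = x n
  cases stAt s x n <;> simp [outp, add_assoc, show (1 + 1 : ZMod 2) = 0 from rfl]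

/-- The automorphism of the binary tree defined by the initial automaton `𝒜_s`,
as a permutation of the boundary `ℤ_2^∞`. -/
def actPerm (s : St) : Equiv.Perm (ℕ → ZMod 2) := (act_invol s).toPerm

/-- The automorphism `t = ac` (apply `a` first, then `c`), as a permutation of the
boundary of the binary tree. Note that for permutations `(f * g) w = f (g w)`, so
`t = ac` in the paper's left-acts-first convention is `actPerm C * actPerm A`. -/
def tP : Equiv.Perm (ℕ → ZMod 2) := actPerm St.C * actPerm St.A

/-- A transformation of the boundary is spherically homogeneous if it acts
coordinatewise by a sequence of permutations of `ℤ/2ℤ`. -/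
def SH (g : (ℕ → ZMod 2) → ℕ → ZMod 2) : Prop :=
  ∃ s : ℕ → Equiv.Perm (ZMod 2), ∀ x n, g x n = s n (x n)

/-- Level: `0` for states `A,B`, `1` for `C,D`. -/
def lv : St → ZMod 2
  | .A => 0 | .B => 0 | .C => 1 | .D => 1

/-- Parity: `0` for `A,C`, `1` for `B,D`. -/
def ps : St → ZMod 2
  | .A => 0 | .B => 1 | .C => 0 | .D => 1

/-- The invariant relating the states reached while reading `x`, `c`, `0`, `x + c`. -/
def Quad (s₁ s₂ s₃ s₄ : St) : Prop :=
  lv s₁ = lv s₂ ∧ lv s₁ = lv s₃ ∧ lv s₁ = lv s₄ ∧ ps s₁ + ps s₂ + ps s₃ + ps s₄ = 0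

instance (s₁ s₂ s₃ s₄ : St) : Decidable (Quad s₁ s₂ s₃ s₄) := by
  unfold Quad; infer_instance

lemma quad_step {s₁ s₂ s₃ s₄ : St} (h : Quad s₁ s₂ s₃ s₄) (u v : ZMod 2) :
    Quad (tr2 s₁ u) (tr2 s₂ v) (tr2 s₃ 0) (tr2 s₄ (u + v)) := by
  revert h
  cases s₁ <;> cases s₂ <;> cases s₃ <;> cases s₄ <;> revert u v <;> decide

lemma quad_outp {s₁ s₂ s₃ s₄ : St} (h : Quad s₁ s₂ s₃ s₄) (u v : ZMod 2) :
    outp s₄ (u + v) = outp s₁ u + outp s₂ v + outp s₃ 0 := by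
  revert h
  cases s₁ <;> cases s₂ <;> cases s₃ <;> cases s₄ <;> revert u v <;> decide

lemma quad_stAt (s : St) (x c : ℕ → ZMod 2) (n : ℕ) :
    Quad (stAt s x n) (stAt s c n) (stAt s 0 n) (stAt s (fun m => x m + c m) n) := by
  induction n with
  | zero =>
      refine ⟨rfl, rfl, rfl, ?_⟩
      show ps s + ps s + ps s + ps s = 0
      cases s <;> decide
  | succ n ih =>
      exact quad_step ih (x n) (c n)

lemma act_affine (s : St) (x c : ℕ → ZMod 2) (n : ℕ) :
    act s (fun m => x m + c m) n = act s x n + act s c n + act s 0 n := by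
  simpa [act] using quad_outp (quad_stAt s x c n) (x n) (c n)

lemma actPerm_apply (s : St) (x : ℕ → ZMod 2) : actPerm s x = act s x := rfl

lemma tP_apply (x : ℕ → ZMod 2) : tP x = act St.C (act St.A x) := rfl

lemma two_cancel (a b : ZMod 2) : a + b + b = a := by
  revert a b; decide

lemma tP_affine (x c : ℕ → ZMod 2) (n : ℕ) :
    tP (fun m => x m + c m) n = tP x n + (tP c n + tP 0 n) := by
  have hA : act St.A (fun m => x m + c m)
      = fun m => act St.A x m + (act St.A c m + act St.A 0 m) := by
    funext m
    rw [act_affine St.A x c m, add_assoc]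
  have h1 : tP (fun m => x m + c m) n
      = act St.C (act St.A x) n + act St.C (fun m => act St.A c m + act St.A 0 m) n
        + act St.C 0 n := by
    rw [tP_apply, hA]
    exact act_affine St.C (act St.A x) (fun m => act St.A c m + act St.A 0 m) n
  have h2 : act St.C (fun m => act St.A c m + act St.A 0 m) n
      = act St.C (act St.A c) n + act St.C (act St.A 0) n + act St.C 0 n :=
    act_affine St.C (act St.A c) (act St.A 0) n
  rw [h1, h2, tP_apply, tP_apply, tP_apply]
  generalize act St.C (act St.A x) n = p
  generalize act St.C (act St.A c) n = q
  generalize act St.C (act St.A 0) n = r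
  generalize act St.C 0 n = z
  revert p q r z; decide

/-- Every permutation of `ZMod 2` is a translation. -/
lemma perm_zmod2 (σ : Equiv.Perm (ZMod 2)) (u : ZMod 2) : σ u = u + σ 0 := by
  have h01 : ∀ v : ZMod 2, v = 0 ∨ v = 1 := by decide
  rcases h01 u with h | h
  · simp [h]
  · subst h
    have hne : σ 1 ≠ σ 0 := fun he => one_ne_zero (σ.injective he)
    have : ∀ a b : ZMod 2, a ≠ b → a = 1 + b := by decide
    exact this _ _ hne

/-- The automorphism `t = ac` lies in the normalizer of `SHAut({0,1}*)`: for every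
spherically homogeneous automorphism `g`, both `t⁻¹gt` and `tgt⁻¹` (products read left
to right, the left factor acting first) are spherically homogeneous. -/
theorem stmt_15 (g : (ℕ → ZMod 2) → ℕ → ZMod 2) (hg : SH g) :
    SH (fun w => tP (g (tP⁻¹ w))) ∧ SH (fun w => tP⁻¹ (g (tP w))) := by
  obtain ⟨σ, hσ⟩ := hg
  set c : ℕ → ZMod 2 := fun n => σ n 0 with hc
  have hgc : ∀ x : ℕ → ZMod 2, g x = fun n => x n + c n := by
    intro x; funext n; rw [hσ x n, perm_zmod2]
  constructor
  · refine ⟨fun n => Equiv.addRight (tP c n + tP 0 n), fun w n => ?_⟩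
    show tP (g (tP⁻¹ w)) n = w n + (tP c n + tP 0 n)
    rw [hgc (tP⁻¹ w), tP_affine (tP⁻¹ w) c n]
    have : tP (tP⁻¹ w) = w := Equiv.apply_symm_apply tP w
    rw [this]
  · -- the linear part of `tP` is a bijection
    set L : Equiv.Perm (ℕ → ZMod 2) :=
      tP.trans (Equiv.addRight (tP 0)) with hL
    set c' : ℕ → ZMod 2 := L.symm c with hc'
    have hLc' : tP c' + tP 0 = c := by
      simp [hL, hc', Equiv.trans_apply]
    refine ⟨fun n => Equiv.addRight (c' n), fun w n => ?_⟩
    show tP⁻¹ (g (tP w)) n = w n + c' n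
    have hkey : g (tP w) = tP (fun m => w m + c' m) := by
      rw [hgc (tP w)]
      funext m
      rw [tP_affine w c' m]
      have : tP c' m + tP 0 m = c m := by
        have := congrFun hLc' m; simpa using this
      rw [this]
    rw [hkey]
    have : tP⁻¹ (tP (fun m => w m + c' m)) = fun m => w m + c' m :=
      Equiv.symm_apply_apply tP _
    rw [this]
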